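/- Suppose g ∈ F⟨Z⟩ is homogeneous of degree d and there exist matrices A_1,...,A_n ∈ M_S(F) such that for every word m = z_{i_1}···z_{i_d} of length d, the coefficient g(m) equals the (1,S) entry of A_{i_1}A_{i_2}···A_{i_d}. Then for any homogeneous f ∈ F⟨Z⟩ of degree d and any scalars a_1,...,a_n ∈ F, the value (f∘g)(a_1,...,a_n) equals the (1,S) entry of f(a_1 A_1, a_2 A_2, ..., a_n A_n) evaluated in M_S(F). -/

import Mathlib

/-- Hadamard (coefficientwise) product on `F⟨Z⟩`. -/
noncomputable def hadamard {F : Type*} [CommRing F] {X : Type*}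
    (f g : MonoidAlgebra F (FreeMonoid X)) : MonoidAlgebra F (FreeMonoid X) :=
  MonoidAlgebra.ofCoeff (Finsupp.zipWith (· * ·) (mul_zero 0) f.coeff g.coeff)

/-- Scalar evaluation `F⟨Z⟩ → F`, substituting `a_i` for `z_i`. -/
noncomputable def evalScalar {F : Type*} [Field F] {n : ℕ} (a : Fin n → F) :
    MonoidAlgebra F (FreeMonoid (Fin n)) →ₐ[F] F :=
  MonoidAlgebra.lift F F (FreeMonoid (Fin n)) (FreeMonoid.lift a)

/-- Evaluation `F⟨Z⟩ → M_S(F)`, substituting the matrix `M_i` for `z_i`. -/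
noncomputable def evalMat {F : Type*} [Field F] {n S : ℕ}
    (M : Fin n → Matrix (Fin S) (Fin S) F) :
    MonoidAlgebra F (FreeMonoid (Fin n)) →ₐ[F] Matrix (Fin S) (Fin S) F :=
  MonoidAlgebra.lift F _ (FreeMonoid (Fin n)) (FreeMonoid.lift M)

lemma prod_smul_map {F : Type*} [Field F] {n S : ℕ} (a : Fin n → F)
    (A : Fin n → Matrix (Fin S) (Fin S) F) (l : List (Fin n)) :
    (l.map (fun i => a i • A i)).prod = (l.map a).prod • (l.map A).prod := by
  induction l with
  | nil => simp
  | cons x t ih => simp [ih, smul_smul, mul_comm]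

/-- If the coefficients of the homogeneous degree-`d` polynomial `g` are given by the
`(1,S)` entries of products of the matrices `A_1,…,A_n`, then for any homogeneous `f`
of degree `d` and scalars `a_1,…,a_n`, the value `(f∘g)(a_1,…,a_n)` equals the `(1,S)`
entry of `f(a_1 A_1, …, a_n A_n)`. -/
theorem evalScalar_hadamard {F : Type*} [Field F] {n S d : ℕ} (hS : 0 < S)
    (f g : MonoidAlgebra F (FreeMonoid (Fin n)))
    (hf : ∀ m ∈ Finsupp.support f.coeff, (FreeMonoid.toList m).length = d)
    (A : Fin n → Matrix (Fin S) (Fin S) F)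
    (hg : ∀ m : FreeMonoid (Fin n), (FreeMonoid.toList m).length = d →
      g.coeff m = ((FreeMonoid.toList m).map A).prod ⟨0, hS⟩ ⟨S - 1, by omega⟩)
    (hg' : ∀ m : FreeMonoid (Fin n), (FreeMonoid.toList m).length ≠ d → g.coeff m = 0)
    (a : Fin n → F) :
    evalScalar a (hadamard f g) =
      evalMat (fun i => a i • A i) f ⟨0, hS⟩ ⟨S - 1, by omega⟩ := by
  classical
  have hsub : (hadamard f g).coeff.support ⊆ f.coeff.support := by
    intro m hm
    simp only [hadamard, MonoidAlgebra.coeff_ofCoeff, Finsupp.mem_support_iff, Finsupp.zipWith_apply] at hm ⊢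
    intro h0; exact hm (by rw [h0, zero_mul])
  simp only [evalScalar, evalMat, MonoidAlgebra.lift_apply]
  rw [Finsupp.sum_of_support_subset _ hsub _ (by intro m _; simp)]
  rw [Finsupp.sum, Matrix.sum_apply]
  apply Finset.sum_congr rfl
  intro m hm
  have hlen := hf m hm
  have hgm := hg m hlen
  simp only [hadamard, MonoidAlgebra.coeff_ofCoeff, Finsupp.zipWith_apply, FreeMonoid.lift_apply,
    Matrix.smul_apply, prod_smul_map, hgm, smul_eq_mul]
  ring
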